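/- Let U ⊆ ℂ be open and let ψ : U → ℝ, s : U → (0, ∞), φ : U → ℝ be twice continuously differentiable, and set σ = s·e^{iφ}. If the derived Codazzi–Mainardi equation ∂ψ = −∂̄σ + 2ξσ/(1 + ξξ̄) holds on U (where ∂, ∂̄ are Wirtinger derivatives), then on U one has the second-order identity e^{−iφ}·∂∂ψ − i·e^{−iφ}·∂φ·∂ψ = −∂∂̄s − i·∂s·∂̄φ − i·s·∂∂̄φ + 2ξ·∂s/(1 + ξξ̄) + 2s/(1 + ξξ̄)². -/

import Mathlib

/-- The Wirtinger derivative `∂f = ½(∂f/∂x − i·∂f/∂y)`. -/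
noncomputable def wirt (f : ℂ → ℂ) (z : ℂ) : ℂ :=
  (1 / 2 : ℂ) * (fderiv ℝ f z 1 - Complex.I * fderiv ℝ f z Complex.I)

/-- The conjugate Wirtinger derivative `∂̄f = ½(∂f/∂x + i·∂f/∂y)`. -/
noncomputable def wirtBar (f : ℂ → ℂ) (z : ℂ) : ℂ :=
  (1 / 2 : ℂ) * (fderiv ℝ f z 1 + Complex.I * fderiv ℝ f z Complex.I)

lemma wirt_hasFDerivAt {f : ℂ → ℂ} {f' : ℂ →L[ℝ] ℂ} {z : ℂ} (h : HasFDerivAt f f' z) :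
    wirt f z = (1 / 2 : ℂ) * (f' 1 - Complex.I * f' Complex.I) := by
  rw [wirt, h.fderiv]

lemma wirtBar_hasFDerivAt {f : ℂ → ℂ} {f' : ℂ →L[ℝ] ℂ} {z : ℂ} (h : HasFDerivAt f f' z) :
    wirtBar f z = (1 / 2 : ℂ) * (f' 1 + Complex.I * f' Complex.I) := by
  rw [wirtBar, h.fderiv]

lemma wirt_congr {f g : ℂ → ℂ} {z : ℂ} (h : f =ᶠ[nhds z] g) : wirt f z = wirt g z := by
  rw [wirt, wirt, h.fderiv_eq]

lemma wirtBar_mul {f g : ℂ → ℂ} {z : ℂ} (hf : DifferentiableAt ℝ f z)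
    (hg : DifferentiableAt ℝ g z) :
    wirtBar (fun w => f w * g w) z = f z * wirtBar g z + wirtBar f z * g z := by
  rw [wirtBar, wirtBar, wirtBar, fderiv_fun_mul hf hg]
  simp only [ContinuousLinearMap.add_apply, ContinuousLinearMap.smul_apply, smul_eq_mul]
  ring

lemma wirtBar_exp {f : ℂ → ℂ} {z : ℂ} (hf : DifferentiableAt ℝ f z) :
    wirtBar (fun w => Complex.exp (f w)) z = Complex.exp (f z) * wirtBar f z := by
  rw [wirtBar, wirtBar, (hf.hasFDerivAt.cexp).fderiv]
  simp only [ContinuousLinearMap.smul_apply, smul_eq_mul]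
  ring

lemma wirtBar_const_mul {f : ℂ → ℂ} {z : ℂ} (c : ℂ) (hf : DifferentiableAt ℝ f z) :
    wirtBar (fun w => c * f w) z = c * wirtBar f z := by
  rw [wirtBar, wirtBar, (hf.hasFDerivAt.const_mul c).fderiv]
  simp only [ContinuousLinearMap.smul_apply, smul_eq_mul]
  ring

lemma hasFDerivAt_id'' (z : ℂ) : HasFDerivAt (fun w : ℂ => w) (ContinuousLinearMap.id ℝ ℂ) z :=
  hasFDerivAt_id z

lemma hasFDerivAt_conj (z : ℂ) :
    HasFDerivAt (fun w : ℂ => (starRingEnd ℂ) w)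
      ((RCLike.conjCLE : ℂ ≃L[ℝ] ℂ) : ℂ →L[ℝ] ℂ) z := by
  simpa only [RCLike.conjCLE_apply] using (RCLike.conjCLE : ℂ ≃L[ℝ] ℂ).hasFDerivAt (x := z)

lemma wirtBar_differentiableAt {f : ℂ → ℂ} {z : ℂ} (hf : ContDiffAt ℝ 2 f z) :
    DifferentiableAt ℝ (wirtBar f) z := by
  have h1 : ContDiffAt ℝ 1 (fderiv ℝ f) z := hf.fderiv_right (by norm_num)
  have h2 : DifferentiableAt ℝ (fderiv ℝ f) z := h1.differentiableAt one_ne_zero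
  have h3 : ∀ v : ℂ, DifferentiableAt ℝ (fun w => fderiv ℝ f w v) z := fun v =>
    (ContinuousLinearMap.apply ℝ ℂ v).differentiableAt.comp z h2
  exact ((h3 1).add ((h3 Complex.I).const_mul Complex.I)).const_mul _

lemma one_add_mul_conj_ne_zero (z : ℂ) : (1 : ℂ) + z * (starRingEnd ℂ) z ≠ 0 := by
  rw [Complex.mul_conj]
  have h : (0:ℝ) < 1 + Complex.normSq z := add_pos_of_pos_of_nonneg one_pos (Complex.normSq_nonneg z)
  intro hc
  have : ((1 + Complex.normSq z : ℝ) : ℂ) = 0 := by push_cast; linear_combination hc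
  exact h.ne' (by exact_mod_cast this)

set_option maxHeartbeats 1000000 in
/-- Second-order consequence of the derived Codazzi–Mainardi equation: if
`σ = s·e^{iφ}` with `s > 0` and `∂ψ = −∂̄σ + 2ξσ/(1+ξξ̄)` on an open set `U`, then
`e^{−iφ}·∂∂ψ − i·e^{−iφ}·∂φ·∂ψ
  = −∂∂̄s − i·∂s·∂̄φ − i·s·∂∂̄φ + 2ξ·∂s/(1+ξξ̄) + 2s/(1+ξξ̄)²` on `U`. -/
theorem codazzi_mainardi_second_order (U : Set ℂ) (hU : IsOpen U)
    (ψ s φ : ℂ → ℝ)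
    (hψ : ContDiffOn ℝ 2 ψ U) (hs : ContDiffOn ℝ 2 s U) (hφ : ContDiffOn ℝ 2 φ U)
    (hspos : ∀ z ∈ U, 0 < s z)
    (σ : ℂ → ℂ)
    (hσ : ∀ z : ℂ, σ z = (s z : ℂ) * Complex.exp (Complex.I * (φ z : ℂ)))
    (hCM : ∀ z ∈ U, wirt (fun w => (ψ w : ℂ)) z =
        -wirtBar σ z + 2 * z * σ z / (1 + z * (starRingEnd ℂ) z)) :
    ∀ z ∈ U,
      Complex.exp (-Complex.I * (φ z : ℂ)) * wirt (fun w => wirt (fun v => (ψ v : ℂ)) w) z -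
        Complex.I * Complex.exp (-Complex.I * (φ z : ℂ)) *
          wirt (fun w => (φ w : ℂ)) z * wirt (fun w => (ψ w : ℂ)) z =
      -wirt (fun w => wirtBar (fun v => (s v : ℂ)) w) z -
        Complex.I * wirt (fun w => (s w : ℂ)) z * wirtBar (fun w => (φ w : ℂ)) z -
        Complex.I * (s z : ℂ) * wirt (fun w => wirtBar (fun v => (φ v : ℂ)) w) z +
        2 * z * wirt (fun w => (s w : ℂ)) z / (1 + z * (starRingEnd ℂ) z) +
        2 * (s z : ℂ) / (1 + z * (starRingEnd ℂ) z) ^ 2 := by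
  have hσf : σ = fun w => (s w : ℂ) * Complex.exp (Complex.I * (φ w : ℂ)) := funext hσ
  subst hσf
  intro z hz
  have hUz : U ∈ nhds z := hU.mem_nhds hz
  -- pointwise differentiability on U
  have hdS : ∀ w ∈ U, DifferentiableAt ℝ (fun v => ((s v : ℝ) : ℂ)) w := fun w hw =>
    Complex.ofRealCLM.differentiableAt.comp w
      (((hs.differentiableOn (by norm_num)).differentiableAt (hU.mem_nhds hw)))
  have hdΦ : ∀ w ∈ U, DifferentiableAt ℝ (fun v => ((φ v : ℝ) : ℂ)) w := fun w hw =>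
    Complex.ofRealCLM.differentiableAt.comp w
      (((hφ.differentiableOn (by norm_num)).differentiableAt (hU.mem_nhds hw)))
  have hdE : ∀ w ∈ U, DifferentiableAt ℝ (fun v => Complex.exp (Complex.I * (φ v : ℂ))) w :=
    fun w hw => ((hdΦ w hw).const_mul Complex.I).cexp
  -- pointwise expansion of the CM equation
  have hG0 : ∀ w ∈ U, wirt (fun v => (ψ v : ℂ)) w =
      (-(wirtBar (fun v => ((s v : ℝ) : ℂ)) w) -
          Complex.I * (s w : ℂ) * wirtBar (fun v => ((φ v : ℝ) : ℂ)) w) *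
        Complex.exp (Complex.I * (φ w : ℂ)) +
      2 * w * ((s w : ℂ) * Complex.exp (Complex.I * (φ w : ℂ))) *
        (1 + w * (starRingEnd ℂ) w)⁻¹ := by
    intro w hw
    rw [hCM w hw, wirtBar_mul (hdS w hw) (hdE w hw),
      wirtBar_exp ((hdΦ w hw).const_mul Complex.I),
      wirtBar_const_mul Complex.I (hdΦ w hw), div_eq_mul_inv]
    ring
  -- second-order data at z
  have hSz : ContDiffAt ℝ 2 (fun v => ((s v : ℝ) : ℂ)) z :=
    Complex.ofRealCLM.contDiff.contDiffAt.comp z (hs.contDiffAt hUz)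
  have hΦz : ContDiffAt ℝ 2 (fun v => ((φ v : ℝ) : ℂ)) z :=
    Complex.ofRealCLM.contDiff.contDiffAt.comp z (hφ.contDiffAt hUz)
  have hS : HasFDerivAt (fun v => ((s v : ℝ) : ℂ))
      (fderiv ℝ (fun v => ((s v : ℝ) : ℂ)) z) z := (hdS z hz).hasFDerivAt
  have hΦ : HasFDerivAt (fun v => ((φ v : ℝ) : ℂ))
      (fderiv ℝ (fun v => ((φ v : ℝ) : ℂ)) z) z := (hdΦ z hz).hasFDerivAt
  have hbS : HasFDerivAt (wirtBar (fun v => ((s v : ℝ) : ℂ)))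
      (fderiv ℝ (wirtBar (fun v => ((s v : ℝ) : ℂ))) z) z :=
    (wirtBar_differentiableAt hSz).hasFDerivAt
  have hbΦ : HasFDerivAt (wirtBar (fun v => ((φ v : ℝ) : ℂ)))
      (fderiv ℝ (wirtBar (fun v => ((φ v : ℝ) : ℂ))) z) z :=
    (wirtBar_differentiableAt hΦz).hasFDerivAt
  have hE := (hΦ.const_mul Complex.I).cexp
  have hDne := one_add_mul_conj_ne_zero z
  have hD := ((hasFDerivAt_id'' z).mul (hasFDerivAt_conj z)).const_add (1 : ℂ)
  have hDinv := (hasFDerivAt_inv' (𝕜 := ℝ) hDne).comp z hD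
  have hG := ((hbS.neg.sub ((hS.const_mul Complex.I).mul hbΦ)).mul hE).add
    ((((hasFDerivAt_id'' z).const_mul (2:ℂ)).mul (hS.mul hE)).mul hDinv)
  have hwG := wirt_hasFDerivAt hG
  simp only [Function.comp, ContinuousLinearMap.add_apply, ContinuousLinearMap.coe_comp',
    Function.comp_apply, ContinuousLinearMap.smul_apply, ContinuousLinearMap.neg_apply,
    ContinuousLinearMap.sub_apply, ContinuousLinearMap.id_apply,
    ContinuousLinearMap.mulLeftRight_apply, smul_eq_mul, ContinuousLinearEquiv.coe_coe,
    RCLike.conjCLE_apply, map_one, Complex.conj_I, Pi.mul_apply, Pi.add_apply, Pi.sub_apply,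
    Pi.neg_apply] at hwG
  have hkey : wirt (fun w => wirt (fun v => ((ψ v : ℝ) : ℂ)) w) z =
      wirt (fun w =>
        (-wirtBar (fun v => ((s v : ℝ) : ℂ)) w -
            Complex.I * (s w : ℂ) * wirtBar (fun v => ((φ v : ℝ) : ℂ)) w) *
          Complex.exp (Complex.I * (φ w : ℂ)) +
        2 * w * ((s w : ℂ) * Complex.exp (Complex.I * (φ w : ℂ))) *
          (1 + w * (starRingEnd ℂ) w)⁻¹) z :=
    wirt_congr (Filter.eventuallyEq_of_mem hUz (fun w hw => hG0 w hw))
  rw [hkey]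
  erw [hwG]
  rw [hG0 z hz]
  rw [neg_mul, Complex.exp_neg]
  have E1 : wirtBar (fun v => ((s v : ℝ) : ℂ)) z = (1 / 2 : ℂ) *
      ((fderiv ℝ (fun v => ((s v : ℝ) : ℂ)) z) 1 +
        Complex.I * (fderiv ℝ (fun v => ((s v : ℝ) : ℂ)) z) Complex.I) :=
    wirtBar_hasFDerivAt hS
  have E2 : wirtBar (fun v => ((φ v : ℝ) : ℂ)) z = (1 / 2 : ℂ) *
      ((fderiv ℝ (fun v => ((φ v : ℝ) : ℂ)) z) 1 +
        Complex.I * (fderiv ℝ (fun v => ((φ v : ℝ) : ℂ)) z) Complex.I) :=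
    wirtBar_hasFDerivAt hΦ
  have E3 : wirt (fun v => ((s v : ℝ) : ℂ)) z = (1 / 2 : ℂ) *
      ((fderiv ℝ (fun v => ((s v : ℝ) : ℂ)) z) 1 -
        Complex.I * (fderiv ℝ (fun v => ((s v : ℝ) : ℂ)) z) Complex.I) :=
    wirt_hasFDerivAt hS
  have E4 : wirt (fun v => ((φ v : ℝ) : ℂ)) z = (1 / 2 : ℂ) *
      ((fderiv ℝ (fun v => ((φ v : ℝ) : ℂ)) z) 1 -
        Complex.I * (fderiv ℝ (fun v => ((φ v : ℝ) : ℂ)) z) Complex.I) :=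
    wirt_hasFDerivAt hΦ
  have E5 : wirt (fun w => wirtBar (fun v => ((s v : ℝ) : ℂ)) w) z = (1 / 2 : ℂ) *
      ((fderiv ℝ (wirtBar fun v => ((s v : ℝ) : ℂ)) z) 1 -
        Complex.I * (fderiv ℝ (wirtBar fun v => ((s v : ℝ) : ℂ)) z) Complex.I) :=
    wirt_hasFDerivAt hbS
  have E6 : wirt (fun w => wirtBar (fun v => ((φ v : ℝ) : ℂ)) w) z = (1 / 2 : ℂ) *
      ((fderiv ℝ (wirtBar fun v => ((φ v : ℝ) : ℂ)) z) 1 -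
        Complex.I * (fderiv ℝ (wirtBar fun v => ((φ v : ℝ) : ℂ)) z) Complex.I) :=
    wirt_hasFDerivAt hbΦ
  simp only [E1, E2, E3, E4, E5, E6]
  have hEne := Complex.exp_ne_zero (Complex.I * (φ z : ℂ))
  have heg : Complex.exp (Complex.I * ((φ z : ℝ) : ℂ)) *
      (Complex.exp (Complex.I * ((φ z : ℝ) : ℂ)))⁻¹ = 1 := mul_inv_cancel₀ hEne
  have hdu : (1 + z * (starRingEnd ℂ) z) * (1 + z * (starRingEnd ℂ) z)⁻¹ = 1 :=
    mul_inv_cancel₀ hDne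
  have hI2 : Complex.I ^ 2 = -1 := Complex.I_sq
  simp only [div_eq_mul_inv, pow_two, mul_inv]
  linear_combination (((s z : ℝ) : ℂ) * (1 + z * (starRingEnd ℂ) z)⁻¹ + (-1 : ℂ) * ((s z : ℝ) : ℂ) * (1 + z * (starRingEnd ℂ) z)⁻¹ * Complex.I ^ 2 + (-1 : ℂ) * z * ((starRingEnd ℂ) z) * ((s z : ℝ) : ℂ) * (1 + z * (starRingEnd ℂ) z)⁻¹ ^ 2 + z * ((starRingEnd ℂ) z) * ((s z : ℝ) : ℂ) * (1 + z * (starRingEnd ℂ) z)⁻¹ ^ 2 * Complex.I ^ 2 + (-1 : ℂ) * z ^ 2 * ((s z : ℝ) : ℂ) * (1 + z * (starRingEnd ℂ) z)⁻¹ ^ 2 + (-1 : ℂ) * z ^ 2 * ((s z : ℝ) : ℂ) * (1 + z * (starRingEnd ℂ) z)⁻¹ ^ 2 * Complex.I ^ 2 + (1/2 : ℂ) * (fderiv ℝ (wirtBar fun v => ((φ v : ℝ) : ℂ)) z) Complex.I * ((s z : ℝ) : ℂ) * Complex.I ^ 2 + (-1/2 : ℂ) * (fderiv ℝ (wirtBar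 fun v => ((φ v : ℝ) : ℂ)) z) 1 * ((s z : ℝ) : ℂ) * Complex.I + (1/2 : ℂ) * (fderiv ℝ (wirtBar fun v => ((s v : ℝ) : ℂ)) z) Complex.I * Complex.I + (-1/2 : ℂ) * (fderiv ℝ (wirtBar fun v => ((s v : ℝ) : ℂ)) z) 1 + (-1 : ℂ) * (fderiv ℝ (fun v => ((s v : ℝ) : ℂ)) z) Complex.I * z * (1 + z * (starRingEnd ℂ) z)⁻¹ * Complex.I + (1/4 : ℂ) * (fderiv ℝ (fun v => ((s v : ℝ) : ℂ)) z) Complex.I * (fderiv ℝ (fun v => ((φ v : ℝ) : ℂ)) z) Complex.I * Complex.I ^ 3 + (1/4 : ℂ) * (fderiv ℝ (fun v => ((s v : ℝ) : ℂ)) z) Complex.I * (fderiv ℝ (fun v => ((φ v : ℝ) : ℂ)) z) 1 * Complex.I ^ 2 + (fderiv ℝ (fun v => ((s v : ℝ) : ℂ)) z) 1 * z * (1 + z * (starRingEnd ℂ) z)⁻¹ + (-1/4 : ℂ) * (fderiv ℝ (fun v => ((s v : ℝ) : ℂ)) z) 1 * (fderiv ℝ (fun v => ((φ v : ℝ) :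 ℂ)) z) Complex.I * Complex.I ^ 2 + (-1/4 : ℂ) * (fderiv ℝ (fun v => ((s v : ℝ) : ℂ)) z) 1 * (fderiv ℝ (fun v => ((φ v : ℝ) : ℂ)) z) 1 * Complex.I) * heg +
    ((-2 : ℂ) * ((s z : ℝ) : ℂ) * (1 + z * (starRingEnd ℂ) z)⁻¹) * hdu +
    ((-1 : ℂ) * ((s z : ℝ) : ℂ) * (1 + z * (starRingEnd ℂ) z)⁻¹ + z * ((starRingEnd ℂ) z) * ((s z : ℝ) : ℂ) * (1 + z * (starRingEnd ℂ) z)⁻¹ ^ 2 + (-1 : ℂ) * z ^ 2 * ((s z : ℝ) : ℂ) * (1 + z * (starRingEnd ℂ) z)⁻¹ ^ 2) * hI2
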